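/- Conditional expectation identity: for every c = (c_1,…,c_n) ∈ C^n, averaging the vanilla policy-gradient estimate over the answers drawn independently from the conditionals yields the variance-reduced estimate: ∑_{(a_1,…,a_n) ∈ A^n} (∏_{i=1}^n κ θ₀ c_i a_i) * g_pg ((c_1,a_1),…,(c_n,a_n)) = g_vr c. -/

import Mathlib

lemma sum_pi_prod {n : ℕ} {A : Type*} [Fintype A] (G : Fin n → A → ℝ) :
    ∑ as : Fin n → A, ∏ j, G j (as j) = ∏ j, ∑ a, G j a := by
  rw [Finset.prod_univ_sum, Fintype.piFinset_univ]

lemma expect_one {n : ℕ} {A : Type*} [Fintype A]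
    (w : Fin n → A → ℝ) (hw : ∀ j, ∑ a, w j a = 1) (i : Fin n) (f : A → ℝ) :
    ∑ as : Fin n → A, (∏ j, w j (as j)) * f (as i) = ∑ a, w i a * f a := by
  have key : ∀ as : Fin n → A,
      (∏ j, w j (as j)) * f (as i)
        = ∏ j, (if j = i then w j (as j) * f (as j) else w j (as j)) := by
    intro as
    rw [← Finset.mul_prod_erase Finset.univ (fun j => w j (as j)) (Finset.mem_univ i),
        ← Finset.mul_prod_erase Finset.univ
          (fun j => if j = i then w j (as j) * f (as j) else w j (as j)) (Finset.mem_univ i)]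
    simp only [if_pos rfl, if_true]
    rw [Finset.prod_congr rfl (fun j hj => if_neg (Finset.ne_of_mem_erase hj))]
    ring
  simp only [key]
  rw [sum_pi_prod (fun j a => if j = i then w j a * f a else w j a),
    ← Finset.mul_prod_erase Finset.univ _ (Finset.mem_univ i)]
  have h1 : (∑ a, if i = i then w i a * f a else w i a) = ∑ a, w i a * f a := by simp
  rw [h1, Finset.prod_congr rfl (fun j hj => by
      rw [Finset.sum_congr rfl (fun a _ => if_neg (Finset.ne_of_mem_erase hj)), hw j]),
    Finset.prod_const_one, mul_one]

lemma expect_two {n : ℕ} {A : Type*} [Fintype A]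
    (w : Fin n → A → ℝ) (hw : ∀ j, ∑ a, w j a = 1) (i j : Fin n) (hij : j ≠ i)
    (f g : A → ℝ) :
    ∑ as : Fin n → A, (∏ k, w k (as k)) * (f (as i) * g (as j))
      = (∑ a, w i a * f a) * (∑ a, w j a * g a) := by
  have hji : (j : Fin n) ∈ (Finset.univ.erase i) := Finset.mem_erase.2 ⟨hij, Finset.mem_univ j⟩
  have key : ∀ as : Fin n → A,
      (∏ k, w k (as k)) * (f (as i) * g (as j))
        = ∏ k, (if k = i then w k (as k) * f (as k)
            else if k = j then w k (as k) * g (as k) else w k (as k)) := by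
    intro as
    rw [← Finset.mul_prod_erase Finset.univ (fun k => w k (as k)) (Finset.mem_univ i),
        ← Finset.mul_prod_erase _ (fun k => w k (as k)) hji,
        ← Finset.mul_prod_erase Finset.univ
          (fun k => if k = i then w k (as k) * f (as k)
            else if k = j then w k (as k) * g (as k) else w k (as k)) (Finset.mem_univ i),
        ← Finset.mul_prod_erase _
          (fun k => if k = i then w k (as k) * f (as k)
            else if k = j then w k (as k) * g (as k) else w k (as k)) hji]
    simp only [if_pos rfl, if_true, if_neg hij]
    have hprod : (∏ k ∈ (Finset.univ.erase i).erase j,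
        (if k = i then w k (as k) * f (as k)
          else if k = j then w k (as k) * g (as k) else w k (as k)))
        = ∏ k ∈ (Finset.univ.erase i).erase j, w k (as k) :=
      Finset.prod_congr rfl (fun k hk => by
        rw [if_neg (Finset.ne_of_mem_erase (Finset.mem_of_mem_erase hk)),
            if_neg (Finset.ne_of_mem_erase hk)])
    rw [hprod]
    ring
  simp only [key]
  rw [sum_pi_prod (fun k a => if k = i then w k a * f a
        else if k = j then w k a * g a else w k a),
    ← Finset.mul_prod_erase Finset.univ _ (Finset.mem_univ i),
    ← Finset.mul_prod_erase _ _ hji]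
  have h1 : (∑ a, if i = i then w i a * f a else if i = j then w i a * g a else w i a)
      = ∑ a, w i a * f a := by simp
  have h2 : (∑ a, if j = i then w j a * f a else if j = j then w j a * g a else w j a)
      = ∑ a, w j a * g a := by simp [hij]
  have hprod : (∏ k ∈ (Finset.univ.erase i).erase j,
      ∑ a, (if k = i then w k a * f a else if k = j then w k a * g a else w k a))
      = 1 := by
    rw [Finset.prod_congr rfl (fun k hk => by
      rw [Finset.sum_congr rfl (fun a _ => by
        rw [if_neg (Finset.ne_of_mem_erase (Finset.mem_of_mem_erase hk)),
            if_neg (Finset.ne_of_mem_erase hk)]), hw k]), Finset.prod_const_one]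
  rw [h1, h2, hprod, mul_one]


theorem conditional_expectation_of_vanilla_pg_eq_var_reduced_pg
    {C A : Type*} [Fintype C] [Fintype A] [Nonempty C] [Nonempty A] [DecidableEq A]
    (θ₀ : ℝ) (astar : A)
    (π : ℝ → C → ℝ) (κ : ℝ → C → A → ℝ)
    (hπ0 : ∀ θ c, 0 ≤ π θ c) (hπ1 : ∀ θ, ∑ c, π θ c = 1)
    (hκ0 : ∀ θ c a, 0 ≤ κ θ c a) (hκ1 : ∀ θ c, ∑ a, κ θ c a = 1)
    (hπpos : ∀ c, 0 < π θ₀ c) (hκpos : ∀ c a, 0 < κ θ₀ c a)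
    (hπdiff : ∀ c, DifferentiableAt ℝ (fun θ => π θ c) θ₀)
    (hκdiff : ∀ c a, DifferentiableAt ℝ (fun θ => κ θ c a) θ₀)
    (n : ℕ) (hn : 2 ≤ n)
    (gpg : (Fin n → C × A) → ℝ)
    (hgpg : ∀ y, gpg y =
      (1 / (n : ℝ)) *
        ∑ i,
          (deriv (fun θ => Real.log (π θ (y i).1)) θ₀ +
              deriv (fun θ => Real.log (κ θ (y i).1 (y i).2)) θ₀) *
            ((if (y i).2 = astar then (1 : ℝ) else 0) -
              (1 / ((n : ℝ) - 1)) *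
                ∑ j ∈ Finset.univ.erase i, (if (y j).2 = astar then (1 : ℝ) else 0)))
    (gvr : (Fin n → C) → ℝ)
    (hgvr : ∀ c, gvr c =
      (1 / (n : ℝ)) *
        ∑ i,
          (deriv (fun θ => Real.log (π θ (c i))) θ₀ *
              (κ θ₀ (c i) astar -
                (1 / ((n : ℝ) - 1)) * ∑ j ∈ Finset.univ.erase i, κ θ₀ (c j) astar) +
            deriv (fun θ => κ θ (c i) astar) θ₀)) :
    ∀ cs : Fin n → C,
      ∑ as : Fin n → A, (∏ i, κ θ₀ (cs i) (as i)) * gpg (fun i => (cs i, as i)) = gvr cs := by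
  intro cs
  have hw1 : ∀ j : Fin n, ∑ a, κ θ₀ (cs j) a = 1 := fun j => hκ1 θ₀ (cs j)
  have hsa : ∀ (c : C) (a : A),
      κ θ₀ c a * deriv (fun θ => Real.log (κ θ c a)) θ₀ = deriv (fun θ => κ θ c a) θ₀ := by
    intro c a
    rw [((hκdiff c a).hasDerivAt.log (hκpos c a).ne').deriv]
    exact mul_div_cancel₀ _ (hκpos c a).ne'
  have hE3 : ∀ c : C, ∑ a, κ θ₀ c a * deriv (fun θ => Real.log (κ θ c a)) θ₀ = 0 := by
    intro c
    have hsum : HasDerivAt (fun θ => ∑ a, κ θ c a)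
        (∑ a, deriv (fun θ => κ θ c a) θ₀) θ₀ :=
      HasDerivAt.fun_sum (fun a _ => (hκdiff c a).hasDerivAt)
    have hconst : (fun θ => ∑ a, κ θ c a) = fun _ => (1 : ℝ) := funext fun θ => hκ1 θ c
    rw [hconst] at hsum
    have h0 : (∑ a, deriv (fun θ => κ θ c a) θ₀) = 0 := by
      simpa using hsum.deriv.symm
    calc ∑ a, κ θ₀ c a * deriv (fun θ => Real.log (κ θ c a)) θ₀
        = ∑ a, deriv (fun θ => κ θ c a) θ₀ := Finset.sum_congr rfl fun a _ => hsa c a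
      _ = 0 := h0
  simp only [hgpg, hgvr]
  have key : ∀ i : Fin n,
      (∑ as : Fin n → A, (∏ k, κ θ₀ (cs k) (as k)) *
        ((deriv (fun θ => Real.log (π θ (cs i))) θ₀ +
            deriv (fun θ => Real.log (κ θ (cs i) (as i))) θ₀) *
          ((if as i = astar then (1 : ℝ) else 0) -
            1 / ((n : ℝ) - 1) *
              ∑ j ∈ Finset.univ.erase i, if as j = astar then (1 : ℝ) else 0)))
      = deriv (fun θ => Real.log (π θ (cs i))) θ₀ *
          (κ θ₀ (cs i) astar -
            1 / ((n : ℝ) - 1) * ∑ j ∈ Finset.univ.erase i, κ θ₀ (cs j) astar) +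
        deriv (fun θ => κ θ (cs i) astar) θ₀ := by
    intro i
    have e1 : ∑ as : Fin n → A, (∏ k, κ θ₀ (cs k) (as k)) *
        ((fun a => (deriv (fun θ => Real.log (π θ (cs i))) θ₀ +
            deriv (fun θ => Real.log (κ θ (cs i) a)) θ₀) *
          (if a = astar then (1 : ℝ) else 0)) (as i))
        = ∑ a, κ θ₀ (cs i) a *
            ((deriv (fun θ => Real.log (π θ (cs i))) θ₀ +
              deriv (fun θ => Real.log (κ θ (cs i) a)) θ₀) *
              (if a = astar then (1 : ℝ) else 0)) :=
      expect_one (fun j a => κ θ₀ (cs j) a) hw1 i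
        (fun a => (deriv (fun θ => Real.log (π θ (cs i))) θ₀ +
            deriv (fun θ => Real.log (κ θ (cs i) a)) θ₀) *
          (if a = astar then (1 : ℝ) else 0))
    have e1' : (∑ a, κ θ₀ (cs i) a *
        ((deriv (fun θ => Real.log (π θ (cs i))) θ₀ +
          deriv (fun θ => Real.log (κ θ (cs i) a)) θ₀) *
          (if a = astar then (1 : ℝ) else 0)))
        = deriv (fun θ => Real.log (π θ (cs i))) θ₀ * κ θ₀ (cs i) astar +
          deriv (fun θ => κ θ (cs i) astar) θ₀ := by
      have hp : ∀ a, κ θ₀ (cs i) a *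
          ((deriv (fun θ => Real.log (π θ (cs i))) θ₀ +
            deriv (fun θ => Real.log (κ θ (cs i) a)) θ₀) *
            (if a = astar then (1 : ℝ) else 0))
          = if a = astar then
              κ θ₀ (cs i) a * (deriv (fun θ => Real.log (π θ (cs i))) θ₀ +
                deriv (fun θ => Real.log (κ θ (cs i) a)) θ₀)
            else 0 := by
        intro a; by_cases h : a = astar <;> simp [h]
      rw [Finset.sum_congr rfl fun a _ => hp a, Finset.sum_ite_eq' Finset.univ astar]
      simp only [Finset.mem_univ, if_true]
      rw [mul_add, hsa (cs i) astar, mul_comm]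
    have e3 : (∑ a, κ θ₀ (cs i) a *
        (deriv (fun θ => Real.log (π θ (cs i))) θ₀ +
          deriv (fun θ => Real.log (κ θ (cs i) a)) θ₀))
        = deriv (fun θ => Real.log (π θ (cs i))) θ₀ := by
      have hp : ∀ a, κ θ₀ (cs i) a *
          (deriv (fun θ => Real.log (π θ (cs i))) θ₀ +
            deriv (fun θ => Real.log (κ θ (cs i) a)) θ₀)
          = deriv (fun θ => Real.log (π θ (cs i))) θ₀ * κ θ₀ (cs i) a +
            κ θ₀ (cs i) a * deriv (fun θ => Real.log (κ θ (cs i) a)) θ₀ := fun a => by ring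
      rw [Finset.sum_congr rfl fun a _ => hp a, Finset.sum_add_distrib, ← Finset.mul_sum,
        hw1 i, hE3 (cs i), mul_one, add_zero]
    have e4 : ∀ j : Fin n,
        (∑ a, κ θ₀ (cs j) a * (if a = astar then (1 : ℝ) else 0)) = κ θ₀ (cs j) astar := by
      intro j; simp
    calc (∑ as : Fin n → A, (∏ k, κ θ₀ (cs k) (as k)) *
        ((deriv (fun θ => Real.log (π θ (cs i))) θ₀ +
            deriv (fun θ => Real.log (κ θ (cs i) (as i))) θ₀) *
          ((if as i = astar then (1 : ℝ) else 0) -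
            1 / ((n : ℝ) - 1) *
              ∑ j ∈ Finset.univ.erase i, if as j = astar then (1 : ℝ) else 0)))
        = ∑ as : Fin n → A,
            ((∏ k, κ θ₀ (cs k) (as k)) *
              ((fun a => (deriv (fun θ => Real.log (π θ (cs i))) θ₀ +
                  deriv (fun θ => Real.log (κ θ (cs i) a)) θ₀) *
                (if a = astar then (1 : ℝ) else 0)) (as i))
            - 1 / ((n : ℝ) - 1) *
                ∑ j ∈ Finset.univ.erase i,
                  (∏ k, κ θ₀ (cs k) (as k)) *
                    ((fun a => deriv (fun θ => Real.log (π θ (cs i))) θ₀ +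
                        deriv (fun θ => Real.log (κ θ (cs i) a)) θ₀) (as i) *
                      (fun a => if a = astar then (1 : ℝ) else 0) (as j))) := by
          refine Finset.sum_congr rfl fun as _ => ?_
          simp only []
          have hWs : (∑ j ∈ Finset.univ.erase i,
              (∏ k, κ θ₀ (cs k) (as k)) *
                ((deriv (fun θ => Real.log (π θ (cs i))) θ₀ +
                    deriv (fun θ => Real.log (κ θ (cs i) (as i))) θ₀) *
                  (if as j = astar then (1 : ℝ) else 0)))
              = ((∏ k, κ θ₀ (cs k) (as k)) *
                  (deriv (fun θ => Real.log (π θ (cs i))) θ₀ +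
                    deriv (fun θ => Real.log (κ θ (cs i) (as i))) θ₀)) *
                ∑ j ∈ Finset.univ.erase i, (if as j = astar then (1 : ℝ) else 0) := by
            rw [Finset.mul_sum]
            exact Finset.sum_congr rfl fun j _ => by ring
          rw [hWs]
          ring
      _ = (∑ as : Fin n → A, (∏ k, κ θ₀ (cs k) (as k)) *
              ((fun a => (deriv (fun θ => Real.log (π θ (cs i))) θ₀ +
                  deriv (fun θ => Real.log (κ θ (cs i) a)) θ₀) *
                (if a = astar then (1 : ℝ) else 0)) (as i)))
          - 1 / ((n : ℝ) - 1) *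
              ∑ j ∈ Finset.univ.erase i,
                ∑ as : Fin n → A,
                  (∏ k, κ θ₀ (cs k) (as k)) *
                    ((fun a => deriv (fun θ => Real.log (π θ (cs i))) θ₀ +
                        deriv (fun θ => Real.log (κ θ (cs i) a)) θ₀) (as i) *
                      (fun a => if a = astar then (1 : ℝ) else 0) (as j)) := by
          rw [Finset.sum_sub_distrib, ← Finset.mul_sum, Finset.sum_comm]
      _ = (deriv (fun θ => Real.log (π θ (cs i))) θ₀ * κ θ₀ (cs i) astar +
            deriv (fun θ => κ θ (cs i) astar) θ₀)
          - 1 / ((n : ℝ) - 1) *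
              ∑ j ∈ Finset.univ.erase i,
                deriv (fun θ => Real.log (π θ (cs i))) θ₀ * κ θ₀ (cs j) astar := by
          rw [e1, e1']
          congr 1
          congr 1
          refine Finset.sum_congr rfl fun j hj => ?_
          rw [expect_two (fun k a => κ θ₀ (cs k) a) hw1 i j
            (Finset.ne_of_mem_erase hj)
            (fun a => deriv (fun θ => Real.log (π θ (cs i))) θ₀ +
              deriv (fun θ => Real.log (κ θ (cs i) a)) θ₀)
            (fun a => if a = astar then (1 : ℝ) else 0), e3, e4 j]
      _ = deriv (fun θ => Real.log (π θ (cs i))) θ₀ *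
            (κ θ₀ (cs i) astar -
              1 / ((n : ℝ) - 1) * ∑ j ∈ Finset.univ.erase i, κ θ₀ (cs j) astar) +
          deriv (fun θ => κ θ (cs i) astar) θ₀ := by
          rw [← Finset.mul_sum]
          ring
  calc (∑ as : Fin n → A, (∏ k, κ θ₀ (cs k) (as k)) *
        (1 / (n : ℝ) *
          ∑ i : Fin n,
            (deriv (fun θ => Real.log (π θ (cs i))) θ₀ +
              deriv (fun θ => Real.log (κ θ (cs i) (as i))) θ₀) *
              ((if as i = astar then (1 : ℝ) else 0) -
                1 / ((n : ℝ) - 1) *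
                  ∑ j ∈ Finset.univ.erase i, if as j = astar then (1 : ℝ) else 0)))
      = 1 / (n : ℝ) *
          ∑ as : Fin n → A, ∑ i : Fin n,
            (∏ k, κ θ₀ (cs k) (as k)) *
              ((deriv (fun θ => Real.log (π θ (cs i))) θ₀ +
                deriv (fun θ => Real.log (κ θ (cs i) (as i))) θ₀) *
                ((if as i = astar then (1 : ℝ) else 0) -
                  1 / ((n : ℝ) - 1) *
                    ∑ j ∈ Finset.univ.erase i, if as j = astar then (1 : ℝ) else 0)) := by
        rw [Finset.mul_sum]
        refine Finset.sum_congr rfl fun as _ => ?_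
        rw [show (∑ i : Fin n,
            (∏ k, κ θ₀ (cs k) (as k)) *
              ((deriv (fun θ => Real.log (π θ (cs i))) θ₀ +
                deriv (fun θ => Real.log (κ θ (cs i) (as i))) θ₀) *
                ((if as i = astar then (1 : ℝ) else 0) -
                  1 / ((n : ℝ) - 1) *
                    ∑ j ∈ Finset.univ.erase i, if as j = astar then (1 : ℝ) else 0)))
          = (∏ k, κ θ₀ (cs k) (as k)) *
              ∑ i : Fin n,
                ((deriv (fun θ => Real.log (π θ (cs i))) θ₀ +
                  deriv (fun θ => Real.log (κ θ (cs i) (as i))) θ₀) *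
                  ((if as i = astar then (1 : ℝ) else 0) -
                    1 / ((n : ℝ) - 1) *
                      ∑ j ∈ Finset.univ.erase i, if as j = astar then (1 : ℝ) else 0))
          from (Finset.mul_sum _ _ _).symm]
        ring
    _ = 1 / (n : ℝ) *
          ∑ i : Fin n, ∑ as : Fin n → A,
            (∏ k, κ θ₀ (cs k) (as k)) *
              ((deriv (fun θ => Real.log (π θ (cs i))) θ₀ +
                deriv (fun θ => Real.log (κ θ (cs i) (as i))) θ₀) *
                ((if as i = astar then (1 : ℝ) else 0) -
                  1 / ((n : ℝ) - 1) *
                    ∑ j ∈ Finset.univ.erase i, if as j = astar then (1 : ℝ) else 0)) := by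
        rw [Finset.sum_comm]
    _ = 1 / (n : ℝ) *
          ∑ i : Fin n,
            (deriv (fun θ => Real.log (π θ (cs i))) θ₀ *
              (κ θ₀ (cs i) astar -
                1 / ((n : ℝ) - 1) * ∑ j ∈ Finset.univ.erase i, κ θ₀ (cs j) astar) +
              deriv (fun θ => κ θ (cs i) astar) θ₀) := by
        congr 1
        exact Finset.sum_congr rfl fun i _ => key i
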